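/- (Equilibrium-independent passivity of port-Hamiltonian systems.) Consider the port-Hamiltonian system ẋ = (𝒥 − ℛ)∇H(x) + Gu + d, y = Gᵀ∇H(x), where H : ℝⁿ → ℝ is differentiable, 𝒥 = −𝒥ᵀ ∈ ℝ^{n×n}, ℛ = ℛᵀ ∈ ℝ^{n×n}, G ∈ ℝ^{n×m}, and d ∈ ℝⁿ is a constant disturbance. Let (x̄, ū) satisfy (𝒥 − ℛ)∇H(x̄) + Gū + d = 0 and set ȳ = Gᵀ∇H(x̄). Then for all x ∈ ℝⁿ and u ∈ ℝᵐ, with y = Gᵀ∇H(x): ⟨∇H(x) − ∇H(x̄), (𝒥 − ℛ)∇H(x) + Gu + d⟩ = −(∇H(x) − ∇H(x̄))ᵀℛ(∇H(x) − ∇H(x̄)) + (y − ȳ)ᵀ(u − ū); in particular, if ℛ is positive semidefinite, the left-hand side is at most (y − ȳ)ᵀ(u − ū). -/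

import Mathlib

open Matrix

/-- **Equilibrium-independent passivity of port-Hamiltonian systems.** For
`ẋ = (𝒥 − ℛ)∇H(x) + Gu + d`, `y = Gᵀ∇H(x)` with `𝒥` skew-symmetric, `ℛ` symmetric and
`(x̄, ū)` a forced equilibrium, the incremental dissipation identity holds along
trajectories, and if `ℛ ⪰ 0` the passivity inequality follows. -/
theorem port_hamiltonian_eid_passivity {n m : ℕ}
    (H : (Fin n → ℝ) → ℝ) (gradH : (Fin n → ℝ) → (Fin n → ℝ))
    (hdiff : Differentiable ℝ H)
    (hgrad : ∀ x v, (fderiv ℝ H x) v = gradH x ⬝ᵥ v)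
    (Jc Rc : Matrix (Fin n) (Fin n) ℝ)
    (hJ : Jcᵀ = -Jc) (hR : Rc.IsSymm)
    (G : Matrix (Fin n) (Fin m) ℝ) (d : Fin n → ℝ)
    (xbar : Fin n → ℝ) (ubar : Fin m → ℝ)
    (heq : (Jc - Rc).mulVec (gradH xbar) + G.mulVec ubar + d = 0) :
    (∀ (x : Fin n → ℝ) (u : Fin m → ℝ),
      (gradH x - gradH xbar) ⬝ᵥ ((Jc - Rc).mulVec (gradH x) + G.mulVec u + d) =
        -((gradH x - gradH xbar) ⬝ᵥ Rc.mulVec (gradH x - gradH xbar))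
        + (Gᵀ.mulVec (gradH x) - Gᵀ.mulVec (gradH xbar)) ⬝ᵥ (u - ubar)) ∧
    (Rc.PosSemidef →
      ∀ (x : Fin n → ℝ) (u : Fin m → ℝ),
        (gradH x - gradH xbar) ⬝ᵥ ((Jc - Rc).mulVec (gradH x) + G.mulVec u + d) ≤
          (Gᵀ.mulVec (gradH x) - Gᵀ.mulVec (gradH xbar)) ⬝ᵥ (u - ubar)) := by
  have key : ∀ (x : Fin n → ℝ) (u : Fin m → ℝ),
      (gradH x - gradH xbar) ⬝ᵥ ((Jc - Rc).mulVec (gradH x) + G.mulVec u + d) =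
        -((gradH x - gradH xbar) ⬝ᵥ Rc.mulVec (gradH x - gradH xbar))
        + (Gᵀ.mulVec (gradH x) - Gᵀ.mulVec (gradH xbar)) ⬝ᵥ (u - ubar) := by
    intro x u
    set e := gradH x - gradH xbar with he
    have hd : d = -((Jc - Rc).mulVec (gradH xbar) + G.mulVec ubar) := by
      have := heq; linear_combination (norm := module) this
    have hskew : e ⬝ᵥ Jc.mulVec e = 0 := by
      have h1 : e ⬝ᵥ Jc.mulVec e = Jc.vecMul e ⬝ᵥ e := (Matrix.dotProduct_mulVec e Jc e)
      have h2 : Jc.vecMul e = Jcᵀ.mulVec e := by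
        rw [← Matrix.mulVec_transpose]
      rw [hJ] at h2
      have h3 : e ⬝ᵥ Jc.mulVec e = -(e ⬝ᵥ Jc.mulVec e) :=
        calc e ⬝ᵥ Jc.mulVec e = Jc.vecMul e ⬝ᵥ e := h1
          _ = (-Jc).mulVec e ⬝ᵥ e := by rw [h2]
          _ = -(Jc.mulVec e ⬝ᵥ e) := by rw [Matrix.neg_mulVec, neg_dotProduct]
          _ = -(e ⬝ᵥ Jc.mulVec e) := by rw [dotProduct_comm]
      linarith
    have hG : ∀ w : Fin m → ℝ, e ⬝ᵥ G.mulVec w = Gᵀ.mulVec e ⬝ᵥ w := by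
      intro w
      rw [Matrix.dotProduct_mulVec, ← Matrix.mulVec_transpose]
    have hGsub : Gᵀ.mulVec (gradH x) - Gᵀ.mulVec (gradH xbar) = Gᵀ.mulVec e := by
      rw [he, Matrix.mulVec_sub]
    rw [hd, hGsub]
    have expand : (Jc - Rc).mulVec (gradH x) + G.mulVec u +
        -((Jc - Rc).mulVec (gradH xbar) + G.mulVec ubar)
        = (Jc - Rc).mulVec e + G.mulVec (u - ubar) := by
      rw [he, Matrix.mulVec_sub, Matrix.mulVec_sub]
      module
    rw [expand, dotProduct_add, hG, Matrix.sub_mulVec, dotProduct_sub, hskew]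
    ring
  refine ⟨key, fun hpsd x u => ?_⟩
  have := key x u
  have hnn := hpsd.dotProduct_mulVec_nonneg (gradH x - gradH xbar)
  rw [this]
  have : (0:ℝ) ≤ (gradH x - gradH xbar) ⬝ᵥ Rc.mulVec (gradH x - gradH xbar) := hnn
  linarith
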